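/- arXiv:math/0607339 — 2 statements merged into one kernel-verified Lean document; each statement's English description precedes it below -/
import Mathlib

section
/- Let L be a lattice of signature (2,n), let w ∈ L⊗ℂ satisfy (w,w) = 0 and (w,w̄) > 0, and set S = {x ∈ L : (x,w) = 0 and (x,w̄) = 0} and T = {x ∈ L : (x,s) = 0 for all s ∈ S}. If g is an isometry of L with g(w) = w (extending g ℂ-linearly to L⊗ℂ), then g(x) = x for every x ∈ T; in particular g acts trivially on T⊗ℚ. -/
namespace A0607339

/-- Extension of scalars `ℤ → ℂ` for integer vectors. -/
def toC (ι : Type) [Fintype ι] : (ι → ℤ) →ₗ[ℤ] (ι → ℂ) where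
  toFun v i := (v i : ℂ)
  map_add' u v := by funext i; simp
  map_smul' c v := by funext i; simp

/-- The `ℤ`-valued bilinear form attached to a Gram matrix `G`. -/
def bZ {ι : Type} [Fintype ι] (G : Matrix ι ι ℤ) (x y : ι → ℤ) : ℤ :=
  dotProduct x (Matrix.mulVec G y)

/-- The `ℂ`-bilinear extension of the form attached to a Gram matrix `G`. -/
noncomputable def bC {ι : Type} [Fintype ι] (G : Matrix ι ι ℤ) (x y : ι → ℂ) : ℂ :=
  dotProduct x (Matrix.mulVec (G.map (Int.cast : ℤ → ℂ)) y)

/-- The Gram matrix `G` has `p` positive and `q` negative squares in a real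
diagonalization, i.e. the lattice has signature `(p,q)`. -/
def HasSignature {ι : Type} [Fintype ι] [DecidableEq ι] (G : Matrix ι ι ℤ) (p q : ℕ) : Prop :=
  ∃ (P : Matrix ι ι ℝ) (d : ι → ℝ), IsUnit P.det ∧
    Matrix.transpose P * G.map (Int.cast : ℤ → ℝ) * P = Matrix.diagonal d ∧
    Nat.card {i // 0 < d i} = p ∧ Nat.card {i // d i < 0} = q

/-- The `ℂ`-linear extension of a `ℤ`-linear endomorphism of the lattice. -/
noncomputable def extC {ι : Type} [Fintype ι] [DecidableEq ι]
    (g : (ι → ℤ) →ₗ[ℤ] (ι → ℤ)) : (ι → ℂ) →ₗ[ℂ] (ι → ℂ) :=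
  Matrix.toLin' ((LinearMap.toMatrix' g).map (Int.cast : ℤ → ℂ))

/-! ### Auxiliary real quadratic-form lemmas -/

open Matrix Finset

set_option linter.unusedSectionVars false

section RealPart

variable {ι : Type} [Fintype ι] [DecidableEq ι]

/-- The diagonal bilinear form with weights `d`. -/
noncomputable def Dfrm (d : ι → ℝ) (x y : ι → ℝ) : ℝ := ∑ i, d i * x i * y i

lemma Dfrm_expand (d : ι → ℝ) (c0 c1 c2 : ℝ) (α β μ : ι → ℝ)
    (hαβ : Dfrm d α β = 0) (hμα : Dfrm d μ α = 0) (hμβ : Dfrm d μ β = 0) :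
    Dfrm d (c0 • α + c1 • β + c2 • μ) (c0 • α + c1 • β + c2 • μ)
      = c0^2 * Dfrm d α α + c1^2 * Dfrm d β β + c2^2 * Dfrm d μ μ := by
  have hβα : Dfrm d β α = 0 := by rw [← hαβ]; exact Finset.sum_congr rfl (by intros; ring)
  have hαμ : Dfrm d α μ = 0 := by rw [← hμα]; exact Finset.sum_congr rfl (by intros; ring)
  have hβμ : Dfrm d β μ = 0 := by rw [← hμβ]; exact Finset.sum_congr rfl (by intros; ring)
  have key : Dfrm d (c0 • α + c1 • β + c2 • μ) (c0 • α + c1 • β + c2 • μ)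
      = c0^2 * Dfrm d α α + c1^2 * Dfrm d β β + c2^2 * Dfrm d μ μ
        + c0*c1*(Dfrm d α β + Dfrm d β α) + c0*c2*(Dfrm d α μ + Dfrm d μ α)
        + c1*c2*(Dfrm d β μ + Dfrm d μ β) := by
    unfold Dfrm
    simp only [Pi.add_apply, Pi.smul_apply, smul_eq_mul, Finset.mul_sum,
      ← Finset.sum_add_distrib]
    exact Finset.sum_congr rfl (fun i _ => by ring)
  rw [key, hαβ, hβα, hαμ, hμα, hβμ, hμβ]; ring

lemma real_key {n : ℕ} (d : Fin (n+2) → ℝ) (hd : ∀ i, d i ≠ 0)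
    (hcard : Nat.card {i // 0 < d i} = 2)
    (α β μ : Fin (n+2) → ℝ)
    (hαα : 0 < Dfrm d α α) (hββ : 0 < Dfrm d β β) (hαβ : Dfrm d α β = 0)
    (hμα : Dfrm d μ α = 0) (hμβ : Dfrm d μ β = 0) (hμμ : 0 ≤ Dfrm d μ μ) :
    μ = 0 := by
  classical
  haveI : Fintype {i // 0 < d i} := Fintype.ofFinite _
  let ψ : (Fin 3 → ℝ) →ₗ[ℝ] ({i // 0 < d i} → ℝ) :=
    { toFun := fun c => fun i => (c 0 • α + c 1 • β + c 2 • μ) i.1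
      map_add' := by intro u v; funext i; simp [add_smul]; ring
      map_smul' := by intro r v; funext i; simp [mul_smul]; ring }
  have hnotinj : ¬ Function.Injective ψ := by
    intro hinj
    have := LinearMap.finrank_le_finrank_of_injective hinj
    rw [Module.finrank_fin_fun] at this
    have h2 : Module.finrank ℝ ({i // 0 < d i} → ℝ) = 2 := by
      rw [Module.finrank_fintype_fun_eq_card, ← Nat.card_eq_fintype_card, hcard]
    omega
  rw [Function.not_injective_iff] at hnotinj
  obtain ⟨c, c', hcc', hne⟩ := hnotinj
  set e : Fin 3 → ℝ := c - c' with he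
  have hee : e ≠ 0 := sub_ne_zero.mpr hne
  have hψe : ψ e = 0 := by rw [he, map_sub, hcc', sub_self]
  set v : Fin (n+2) → ℝ := e 0 • α + e 1 • β + e 2 • μ with hv
  have hvpos : ∀ i, 0 < d i → v i = 0 := by
    intro i hi
    have := congrFun hψe ⟨i, hi⟩
    simpa [ψ, hv] using this
  have hvv : Dfrm d v v = e 0 ^2 * Dfrm d α α + e 1 ^2 * Dfrm d β β + e 2 ^2 * Dfrm d μ μ :=
    Dfrm_expand d _ _ _ α β μ hαβ hμα hμβ
  have hge : 0 ≤ Dfrm d v v := by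
    rw [hvv]
    nlinarith [sq_nonneg (e 0), sq_nonneg (e 1), sq_nonneg (e 2),
      mul_nonneg (sq_nonneg (e 2)) hμμ]
  have hterm : ∀ i ∈ Finset.univ, d i * v i * v i ≤ 0 := by
    intro i _
    by_cases hi : 0 < d i
    · rw [hvpos i hi]; simp
    · have : d i < 0 := lt_of_le_of_ne (not_lt.mp hi) (hd i)
      nlinarith [sq_nonneg (v i)]
  have hle : Dfrm d v v ≤ 0 := Finset.sum_nonpos hterm
  have hvv0 : Dfrm d v v = 0 := le_antisymm hle hge
  have hveach : ∀ i, v i = 0 := by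
    intro i
    have hzero := (Finset.sum_eq_zero_iff_of_nonpos hterm).mp hvv0 i (Finset.mem_univ i)
    rcases mul_eq_zero.mp hzero with h | h
    · rcases mul_eq_zero.mp h with h' | h'
      · exact absurd h' (hd i)
      · exact h'
    · exact h
  have h0 : e 0 = 0 := by
    have h1 : e 0 ^ 2 * Dfrm d α α = 0 := by
      nlinarith [mul_nonneg (sq_nonneg (e 1)) hββ.le, mul_nonneg (sq_nonneg (e 2)) hμμ,
        mul_nonneg (sq_nonneg (e 0)) hαα.le]
    rcases mul_eq_zero.mp h1 with h | h
    · exact pow_eq_zero_iff (by norm_num) |>.mp h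
    · exact absurd h hαα.ne'
  have h1 : e 1 = 0 := by
    have h1 : e 1 ^ 2 * Dfrm d β β = 0 := by
      nlinarith [mul_nonneg (sq_nonneg (e 0)) hαα.le, mul_nonneg (sq_nonneg (e 2)) hμμ,
        mul_nonneg (sq_nonneg (e 1)) hββ.le]
    rcases mul_eq_zero.mp h1 with h | h
    · exact pow_eq_zero_iff (by norm_num) |>.mp h
    · exact absurd h hββ.ne'
  have he2 : e 2 ≠ 0 := by
    intro h2
    apply hee; funext j; fin_cases j <;> simp [h0, h1, h2]
  funext i
  have hvi := hveach i
  rw [hv] at hvi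
  simp only [Pi.add_apply, Pi.smul_apply, smul_eq_mul, h0, h1, zero_mul, zero_add] at hvi
  rcases mul_eq_zero.mp hvi with h | h
  · exact absurd h he2
  · simpa using h

lemma form_change (Gr P : Matrix ι ι ℝ) (d : ι → ℝ)
    (hdiag : Pᵀ * Gr * P = Matrix.diagonal d) (x y : ι → ℝ) :
    (P *ᵥ x) ⬝ᵥ (Gr *ᵥ (P *ᵥ y)) = Dfrm d x y := by
  rw [mulVec_mulVec, dotProduct_mulVec, ← vecMul_transpose, vecMul_vecMul,
    ← Matrix.mul_assoc, hdiag]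
  simp only [dotProduct, vecMul_diagonal, Dfrm]
  exact Finset.sum_congr rfl (fun i _ => by ring)

lemma sig_key {n : ℕ} (Gr : Matrix (Fin (n+2)) (Fin (n+2)) ℝ) (hdet : Gr.det ≠ 0)
    (P : Matrix (Fin (n+2)) (Fin (n+2)) ℝ) (d : Fin (n+2) → ℝ)
    (hP : IsUnit P.det) (hdiag : Pᵀ * Gr * P = Matrix.diagonal d)
    (hcard : Nat.card {i // 0 < d i} = 2)
    (a b u : Fin (n+2) → ℝ)
    (haa : 0 < a ⬝ᵥ (Gr *ᵥ a)) (hbb : 0 < b ⬝ᵥ (Gr *ᵥ b)) (hab : a ⬝ᵥ (Gr *ᵥ b) = 0)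
    (hua : u ⬝ᵥ (Gr *ᵥ a) = 0) (hub : u ⬝ᵥ (Gr *ᵥ b) = 0) (huu : 0 ≤ u ⬝ᵥ (Gr *ᵥ u)) :
    u = 0 := by
  have hd : ∀ i, d i ≠ 0 := by
    intro i
    have hdd : (Matrix.diagonal d).det ≠ 0 := by
      rw [← hdiag]
      simp only [Matrix.det_mul, Matrix.det_transpose]
      exact mul_ne_zero (mul_ne_zero hP.ne_zero hdet) hP.ne_zero
    rw [Matrix.det_diagonal] at hdd
    exact fun h => hdd (Finset.prod_eq_zero (Finset.mem_univ i) h)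
  have hPv : ∀ v : Fin (n+2) → ℝ, P *ᵥ (P⁻¹ *ᵥ v) = v := by
    intro v
    rw [mulVec_mulVec, Matrix.mul_nonsing_inv _ hP, one_mulVec]
  set α := P⁻¹ *ᵥ a; set β := P⁻¹ *ᵥ b; set μ := P⁻¹ *ᵥ u
  have key : ∀ x y : Fin (n+2) → ℝ,
      (P *ᵥ x) ⬝ᵥ (Gr *ᵥ (P *ᵥ y)) = Dfrm d x y := form_change Gr P d hdiag
  have e1 : Dfrm d α α = a ⬝ᵥ (Gr *ᵥ a) := by rw [← key]; simp only [α, β, μ, hPv]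
  have e2 : Dfrm d β β = b ⬝ᵥ (Gr *ᵥ b) := by rw [← key]; simp only [α, β, μ, hPv]
  have e3 : Dfrm d α β = a ⬝ᵥ (Gr *ᵥ b) := by rw [← key]; simp only [α, β, μ, hPv]
  have e4 : Dfrm d μ α = u ⬝ᵥ (Gr *ᵥ a) := by rw [← key]; simp only [α, β, μ, hPv]
  have e5 : Dfrm d μ β = u ⬝ᵥ (Gr *ᵥ b) := by rw [← key]; simp only [α, β, μ, hPv]
  have e6 : Dfrm d μ μ = u ⬝ᵥ (Gr *ᵥ u) := by rw [← key]; simp only [α, β, μ, hPv]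
  have hμ : μ = 0 := real_key d hd hcard α β μ (e1 ▸ haa) (e2 ▸ hbb) (e3 ▸ hab)
    (e4 ▸ hua) (e5 ▸ hub) (e6 ▸ huu)
  have := hPv u
  rw [show P⁻¹ *ᵥ u = μ from rfl, hμ, mulVec_zero] at this
  exact this.symm

end RealPart

/-! ### Auxiliary complex bilinear form lemmas -/

section ComplexPart

variable {ι : Type} [Fintype ι] [DecidableEq ι]

/-- Real vectors regarded as complex vectors. -/
def RC (x : ι → ℝ) : ι → ℂ := fun i => (x i : ℂ)

/-- The `ℝ`-bilinear extension of the form attached to a Gram matrix `G`. -/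
noncomputable def bR (G : Matrix ι ι ℤ) (x y : ι → ℝ) : ℝ :=
  dotProduct x (Matrix.mulVec (G.map (Int.cast : ℤ → ℝ)) y)

lemma bC_RC (G : Matrix ι ι ℤ) (p q : ι → ℝ) :
    bC G (RC p) (RC q) = ((bR G p q : ℝ) : ℂ) := by
  simp only [bC, bR, RC, dotProduct, Matrix.mulVec, Matrix.map_apply]
  push_cast
  rfl

lemma bC_add_left (G : Matrix ι ι ℤ) (x y z : ι → ℂ) :
    bC G (x + y) z = bC G x z + bC G y z := by
  simp [bC, add_dotProduct]

lemma bC_sub_left (G : Matrix ι ι ℤ) (x y z : ι → ℂ) :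
    bC G (x - y) z = bC G x z - bC G y z := by
  simp [bC, sub_dotProduct]

lemma bC_smul_left (G : Matrix ι ι ℤ) (c : ℂ) (x z : ι → ℂ) :
    bC G (c • x) z = c * bC G x z := by
  simp [bC, smul_dotProduct, smul_eq_mul]

lemma bC_add_right (G : Matrix ι ι ℤ) (x y z : ι → ℂ) :
    bC G x (y + z) = bC G x y + bC G x z := by
  simp [bC, mulVec_add, dotProduct_add]

lemma bC_smul_right (G : Matrix ι ι ℤ) (c : ℂ) (x z : ι → ℂ) :
    bC G x (c • z) = c * bC G x z := by
  simp [bC, mulVec_smul, dotProduct_smul, smul_eq_mul]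

lemma bC_expand (G : Matrix ι ι ℤ) (p q r s : ι → ℝ) :
    bC G (RC p + Complex.I • RC q) (RC r + Complex.I • RC s)
      = ((bR G p r - bR G q s : ℝ) : ℂ) + ((bR G p s + bR G q r : ℝ) : ℂ) * Complex.I := by
  simp only [bC_add_left, bC_add_right, bC_smul_left, bC_smul_right, bC_RC]
  push_cast
  ring_nf
  simp [Complex.I_sq]
  ring

lemma bR_symm (G : Matrix ι ι ℤ) (hsym : G.IsSymm) (x y : ι → ℝ) :
    bR G x y = bR G y x := by
  have h : (G.map (Int.cast : ℤ → ℝ)).IsSymm := hsym.map _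
  unfold bR
  rw [Matrix.dotProduct_mulVec,
    show x ᵥ* (G.map (Int.cast : ℤ → ℝ)) = (G.map (Int.cast : ℤ → ℝ)) *ᵥ x from by
      rw [← Matrix.vecMul_transpose, h],
    dotProduct_comm]

lemma bR_neg_right (G : Matrix ι ι ℤ) (x y : ι → ℝ) :
    bR G x (-y) = -(bR G x y) := by
  simp [bR, Matrix.mulVec_neg, dotProduct_neg]

lemma bR_zero_left (G : Matrix ι ι ℤ) (y : ι → ℝ) :
    bR G 0 y = 0 := by
  simp [bR]

lemma bZ_cast (G : Matrix ι ι ℤ) (x y : ι → ℤ) :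
    bR G (fun i => (x i : ℝ)) (fun i => (y i : ℝ)) = ((bZ G x y : ℤ) : ℝ) := by
  simp only [bZ, bR, dotProduct, Matrix.mulVec, Matrix.map_apply]
  push_cast
  rfl

lemma toC_eq_RC (x : ι → ℤ) : toC ι x = RC (fun i => (x i : ℝ)) := by
  funext i; simp [toC, RC]

/-- Triple product identity. -/
lemma tripleProd {R : Type*} [CommRing R] (A M : Matrix ι ι R) (x y : ι → R) :
    (M *ᵥ x) ⬝ᵥ (A *ᵥ (M *ᵥ y)) = x ⬝ᵥ ((Mᵀ * A * M) *ᵥ y) := by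
  rw [mulVec_mulVec, dotProduct_mulVec, ← vecMul_transpose, vecMul_vecMul,
    ← Matrix.mul_assoc, ← dotProduct_mulVec]

end ComplexPart

/-- **Lemma 2.4 (G0_acts_trivially_on_T).** In the situation of Lemma 2.2, if `g` is
an isometry of `L` with `g(w) = w`, then `g` fixes every `x ∈ T`; in particular `g`
acts trivially on `T⊗ℚ`. -/
theorem stmt_2 (n : ℕ) (G : Matrix (Fin (n + 2)) (Fin (n + 2)) ℤ)
    (hsym : G.IsSymm) (hdet : G.det ≠ 0) (hsig : HasSignature G 2 n)
    (w : Fin (n + 2) → ℂ) (hww : bC G w w = 0)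
    (hwwbar : ∃ t : ℝ, 0 < t ∧ bC G w (star w) = (t : ℂ))
    (S T : Set (Fin (n + 2) → ℤ))
    (hS : S = {x | bC G (toC _ x) w = 0 ∧ bC G (toC _ x) (star w) = 0})
    (hT : T = {x | ∀ s ∈ S, bZ G x s = 0})
    (g : (Fin (n + 2) → ℤ) ≃ₗ[ℤ] (Fin (n + 2) → ℤ))
    (hgiso : ∀ x y, bZ G (g x) (g y) = bZ G x y)
    (hgw : extC (g : (Fin (n + 2) → ℤ) →ₗ[ℤ] (Fin (n + 2) → ℤ)) w = w) :
    ∀ x ∈ T, g x = x := by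
  classical
  intro x hx
  set M := LinearMap.toMatrix' (g : (Fin (n + 2) → ℤ) →ₗ[ℤ] (Fin (n + 2) → ℤ)) with hMdef
  have hgapp : ∀ v, g v = M *ᵥ v := by
    intro v
    calc g v = (g : (Fin (n + 2) → ℤ) →ₗ[ℤ] (Fin (n + 2) → ℤ)) v := rfl
      _ = Matrix.toLin' M v := by rw [hMdef, Matrix.toLin'_toMatrix']
      _ = M *ᵥ v := Matrix.toLin'_apply _ _
  set Mc := M.map (Int.cast : ℤ → ℂ) with hMcdef
  have hext : ∀ v, extC (g : (Fin (n + 2) → ℤ) →ₗ[ℤ] (Fin (n + 2) → ℤ)) v = Mc *ᵥ v :=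
    fun v => Matrix.toLin'_apply _ _
  have hMw : Mc *ᵥ w = w := by rw [← hext]; exact hgw
  have hMstarw : Mc *ᵥ (star w) = star w := by
    have hcomm : Mc *ᵥ (star w) = star (Mc *ᵥ w) := by
      funext i
      simp only [Pi.star_apply, Matrix.mulVec, dotProduct, Matrix.map_apply, hMcdef]
      rw [star_sum]
      refine Finset.sum_congr rfl (fun j _ => ?_)
      rw [star_mul']
      simp
    rw [hcomm, hMw]
  have hcastM : ∀ v : Fin (n + 2) → ℤ, Mc *ᵥ (toC _ v) = toC _ (M *ᵥ v) := by
    intro v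
    funext i
    simp only [Matrix.mulVec, dotProduct, Matrix.map_apply, toC, LinearMap.coe_mk,
      AddHom.coe_mk, hMcdef]
    push_cast
    rfl
  have hMG : Mᵀ * G * M = G := by
    ext i j
    have h := hgiso (Pi.single i 1) (Pi.single j 1)
    rw [hgapp, hgapp] at h
    unfold bZ at h
    rw [tripleProd] at h
    simpa [Matrix.mulVec_single, single_dotProduct, dotProduct_single] using h
  have hMcG : Mcᵀ * (G.map (Int.cast : ℤ → ℂ)) * Mc = G.map (Int.cast : ℤ → ℂ) := by
    have h2 : ((Mᵀ * G * M).map ⇑(Int.castRingHom ℂ)) = G.map ⇑(Int.castRingHom ℂ) :=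
      congrArg (fun A => A.map ⇑(Int.castRingHom ℂ)) hMG
    rw [Matrix.map_mul, Matrix.map_mul, Matrix.transpose_map] at h2
    simpa [Int.coe_castRingHom, hMcdef] using h2
  have hinv : ∀ u v : Fin (n + 2) → ℂ, bC G (Mc *ᵥ u) (Mc *ᵥ v) = bC G u v := by
    intro u v
    unfold bC
    rw [tripleProd, hMcG]
  have hbCg : ∀ (v : Fin (n + 2) → ℤ) (c : Fin (n + 2) → ℂ), Mc *ᵥ c = c →
      bC G (toC _ (g v)) c = bC G (toC _ v) c := by
    intro v c hc
    calc bC G (toC _ (g v)) c = bC G (Mc *ᵥ toC _ v) (Mc *ᵥ c) := by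
          rw [hgapp, ← hcastM, hc]
      _ = bC G (toC _ v) c := hinv _ _
  have hgS : ∀ s ∈ S, g.symm s ∈ S := by
    intro s hs
    rw [hS] at hs ⊢
    obtain ⟨hs1, hs2⟩ := hs
    constructor
    · have h := hbCg (g.symm s) w hMw
      rw [g.apply_symm_apply] at h
      rw [← h]; exact hs1
    · have h := hbCg (g.symm s) (star w) hMstarw
      rw [g.apply_symm_apply] at h
      rw [← h]; exact hs2
  set z : Fin (n + 2) → ℤ := g x - x with hzdef
  have hzS : z ∈ S := by
    rw [hS]
    constructor
    · show bC G (toC _ z) w = 0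
      rw [hzdef, map_sub, bC_sub_left, hbCg x w hMw, sub_self]
    · show bC G (toC _ z) (star w) = 0
      rw [hzdef, map_sub, bC_sub_left, hbCg x (star w) hMstarw, sub_self]
  have hxT : ∀ s ∈ S, bZ G x s = 0 := by rw [hT] at hx; exact hx
  have hz1 : bZ G x z = 0 := hxT z hzS
  have hz2 : bZ G (g x) z = 0 := by
    have h : bZ G (g x) z = bZ G (g x) (g (g.symm z)) := by rw [g.apply_symm_apply]
    rw [h, hgiso]
    exact hxT _ (hgS z hzS)
  have hzz : bZ G z z = 0 := by
    have h : bZ G z z = bZ G (g x) z - bZ G x z := by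
      rw [hzdef]; simp [bZ, sub_dotProduct]
    rw [h, hz1, hz2, sub_zero]
  -- pass to the real quadratic space
  obtain ⟨P, d, hP, hdiag, hpos, _⟩ := hsig
  set a : Fin (n + 2) → ℝ := fun i => (w i).re with hadef
  set b : Fin (n + 2) → ℝ := fun i => (w i).im with hbdef
  have hwdecomp : w = RC a + Complex.I • RC b := by
    funext i
    simp only [Pi.add_apply, Pi.smul_apply, RC, smul_eq_mul, hadef, hbdef]
    rw [mul_comm]
    exact (Complex.re_add_im _).symm
  have hstarw : star w = RC a + Complex.I • RC (-b) := by
    funext i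
    simp only [Pi.star_apply, Pi.add_apply, Pi.smul_apply, RC, smul_eq_mul, Pi.neg_apply,
      hadef, hbdef]
    rw [Complex.star_def, Complex.ext_iff]
    simp
  set zr : Fin (n + 2) → ℝ := fun i => ((z i : ℝ)) with hzrdef
  have hzdecomp : toC _ z = RC zr + Complex.I • RC 0 := by
    rw [toC_eq_RC]
    funext i
    simp [RC, hzrdef]
  -- extract real identities
  have hw1 : bR G a a - bR G b b = 0 ∧ bR G a b + bR G b a = 0 := by
    have h := hww
    rw [hwdecomp, bC_expand] at h
    constructor
    · have := congrArg Complex.re h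
      simpa using this
    · have := congrArg Complex.im h
      simpa using this
  have hab : bR G a b = 0 := by
    have hsab := bR_symm G hsym a b
    have := hw1.2
    rw [← hsab] at this
    linarith
  obtain ⟨t, ht, htw⟩ := hwwbar
  have hw2 : bR G a a + bR G b b = t := by
    rw [hstarw, hwdecomp, bC_expand] at htw
    have := congrArg Complex.re htw
    simp [bR_neg_right] at this
    linarith
  have haa : 0 < bR G a a := by
    have := hw1.1
    linarith
  have hbb : 0 < bR G b b := by
    have := hw1.1
    linarith
  have hzw : bR G zr a = 0 ∧ bR G zr b = 0 := by
    have h : bC G (toC _ z) w = 0 := by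
      rw [hS] at hzS; exact hzS.1
    rw [hzdecomp, hwdecomp, bC_expand] at h
    constructor
    · have := congrArg Complex.re h
      simpa [bR_zero_left] using this
    · have := congrArg Complex.im h
      simpa [bR_zero_left] using this
  have hzzr : bR G zr zr = 0 := by
    rw [hzrdef, bZ_cast, hzz]
    simp
  -- apply the signature lemma
  have hdetR : (G.map (Int.cast : ℤ → ℝ)).det ≠ 0 := by
    have h : (G.map (Int.cast : ℤ → ℝ)).det = ((G.det : ℤ) : ℝ) := by
      rw [show G.map (Int.cast : ℤ → ℝ) = (Int.castRingHom ℝ).mapMatrix G from rfl,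
        ← RingHom.map_det]
      rfl
    rw [h]
    exact_mod_cast hdet
  have hzr0 : zr = 0 := by
    refine sig_key (G.map (Int.cast : ℤ → ℝ)) hdetR P d hP hdiag hpos a b zr
      haa hbb hab hzw.1 hzw.2 ?_
    rw [show zr ⬝ᵥ ((G.map (Int.cast : ℤ → ℝ)) *ᵥ zr) = bR G zr zr from rfl, hzzr]
  have hz0 : z = 0 := by
    funext i
    have h := congrFun hzr0 i
    simp only [hzrdef, Pi.zero_apply] at h
    exact_mod_cast h
  have := sub_eq_zero.mp (hzdef ▸ hz0)
  exact this

end A0607339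
end

section
/- Let M be an even unimodular lattice, let T ⊆ M be a primitive nondegenerate sublattice and let S = {x ∈ M : (x,t) = 0 for all t ∈ T} be its orthogonal complement. Suppose there is an isometry σ of M with σ(t) = t for all t ∈ T and σ(s) = −s for all s ∈ S. Then the discriminant groups A_T and A_S are 2-elementary, i.e. 2·A_T = 0 and 2·A_S = 0. -/
namespace A0607339

/-- Extension of scalars `ℤ → ℚ` for integer vectors. -/
def toQ (ι : Type) [Fintype ι] : (ι → ℤ) →ₗ[ℤ] (ι → ℚ) where
  toFun v i := (v i : ℚ)
  map_add' u v := by funext i; simp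
  map_smul' c v := by funext i; simp

/-- The `ℚ`-bilinear extension of the form attached to a Gram matrix `G`. -/
def bQ {ι : Type} [Fintype ι] (G : Matrix ι ι ℤ) (x y : ι → ℚ) : ℚ :=
  dotProduct x (Matrix.mulVec (G.map (Int.cast : ℤ → ℚ)) y)

/-- The orthogonal complement in `L` of a subset `S ⊆ L`. -/
def orthoZ {ι : Type} [Fintype ι] (G : Matrix ι ι ℤ) (S : Set (ι → ℤ)) :
    Submodule ℤ (ι → ℤ) where
  carrier := {x | ∀ s ∈ S, bZ G x s = 0}
  zero_mem' := by
    intro s hs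
    exact zero_dotProduct _
  add_mem' := by
    intro a b ha hb s hs
    have h : bZ G (a + b) s = bZ G a s + bZ G b s := add_dotProduct a b _
    rw [h, ha s hs, hb s hs, add_zero]
  smul_mem' := by
    intro c a ha s hs
    have h : bZ G (c • a) s = c • bZ G a s := smul_dotProduct c a _
    rw [h, ha s hs, smul_zero]

/-- The statement that the discriminant group of a primitive nondegenerate sublattice
`N` of `L` is 2-elementary: twice any element of the dual `N^∨ ⊆ N⊗ℚ` lies in `N`. -/
def DiscIsTwoElementary {ι : Type} [Fintype ι] (G : Matrix ι ι ℤ)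
    (N : Submodule ℤ (ι → ℤ)) : Prop :=
  ∀ x : ι → ℚ, x ∈ Submodule.span ℚ (⇑(toQ ι) '' (N : Set (ι → ℤ))) →
    (∀ t ∈ N, ∃ k : ℤ, bQ G x (toQ ι t) = (k : ℚ)) →
    (2 : ℤ) • x ∈ ⇑(toQ ι) '' (N : Set (ι → ℤ))

section Aux

variable {ι : Type} [Fintype ι]

lemma toQ_injective : Function.Injective (toQ ι) := by
  intro u v h
  funext i
  have h2 : (u i : ℚ) = (v i : ℚ) := congrFun h i
  exact_mod_cast h2

lemma toQ_zsmul (c : ℤ) (v : ι → ℤ) : toQ ι (c • v) = (c : ℚ) • toQ ι v := by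
  funext i
  simp [toQ]

lemma zsmulQ (c : ℤ) (v : ι → ℚ) : c • v = (c : ℚ) • v :=
  (Int.cast_smul_eq_zsmul ℚ c v).symm

lemma bZ_smul_left (G : Matrix ι ι ℤ) (c : ℤ) (x y : ι → ℤ) :
    bZ G (c • x) y = c * bZ G x y := by
  have h := smul_dotProduct c x (G.mulVec y)
  simpa [bZ, smul_eq_mul] using h

lemma bZ_sub_left (G : Matrix ι ι ℤ) (x y z : ι → ℤ) :
    bZ G (x - y) z = bZ G x z - bZ G y z := by
  simp [bZ, sub_dotProduct]

lemma bZ_neg_left (G : Matrix ι ι ℤ) (x y : ι → ℤ) :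
    bZ G (-x) y = - bZ G x y := by
  simp [bZ, neg_dotProduct]

lemma bZ_neg_right (G : Matrix ι ι ℤ) (x y : ι → ℤ) :
    bZ G x (-y) = - bZ G x y := by
  simp [bZ, Matrix.mulVec_neg, dotProduct_neg]

lemma bZ_sub_right (G : Matrix ι ι ℤ) (x y z : ι → ℤ) :
    bZ G x (y - z) = bZ G x y - bZ G x z := by
  simp [bZ, Matrix.mulVec_sub, dotProduct_sub]

lemma bQ_toQ (G : Matrix ι ι ℤ) (u v : ι → ℤ) :
    bQ G (toQ ι u) (toQ ι v) = (bZ G u v : ℚ) := by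
  simp only [bQ, bZ, dotProduct, Matrix.mulVec, Matrix.map_apply, toQ,
    LinearMap.coe_mk, AddHom.coe_mk]
  push_cast
  rfl

lemma bQ_sub_left (G : Matrix ι ι ℤ) (x y z : ι → ℚ) :
    bQ G (x - y) z = bQ G x z - bQ G y z := by
  simp [bQ, sub_dotProduct]

lemma bQ_add_right (G : Matrix ι ι ℤ) (x y z : ι → ℚ) :
    bQ G x (y + z) = bQ G x y + bQ G x z := by
  simp [bQ, Matrix.mulVec_add, dotProduct_add]

lemma bQ_smul_left (G : Matrix ι ι ℤ) (q : ℚ) (x z : ι → ℚ) :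
    bQ G (q • x) z = q * bQ G x z := by
  simp [bQ, smul_dotProduct, smul_eq_mul]

lemma bQ_smul_right (G : Matrix ι ι ℤ) (q : ℚ) (x z : ι → ℚ) :
    bQ G x (q • z) = q * bQ G x z := by
  simp [bQ, Matrix.mulVec_smul, dotProduct_smul, smul_eq_mul]

/-- Clearing denominators of a rational vector. -/
lemma exists_denom (v : ι → ℚ) :
    ∃ c : ℤ, c ≠ 0 ∧ ∃ w : ι → ℤ, (c : ℚ) • v = toQ ι w := by
  classical
  refine ⟨∏ i, ((v i).den : ℤ), ?_, fun i =>
      (∏ j ∈ Finset.univ.erase i, ((v j).den : ℤ)) * (v i).num, ?_⟩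
  · rw [Finset.prod_ne_zero_iff]
    intro i _
    exact_mod_cast (v i).den_nz
  · funext i
    have hsplit : (((v i).den : ℤ)) * ∏ j ∈ Finset.univ.erase i, ((v j).den : ℤ)
        = ∏ j, ((v j).den : ℤ) :=
      Finset.mul_prod_erase Finset.univ (fun j => ((v j).den : ℤ)) (Finset.mem_univ i)
    show ((∏ j, ((v j).den : ℤ) : ℤ) : ℚ) * v i
        = (((∏ j ∈ Finset.univ.erase i, ((v j).den : ℤ)) * (v i).num : ℤ) : ℚ)
    rw [← hsplit]
    push_cast
    rw [mul_comm ((v i).den : ℚ) _, mul_assoc, mul_comm ((v i).den : ℚ) (v i),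
      Rat.mul_den_eq_num]

/-- Clearing denominators for elements of the rational span of an integral submodule. -/
lemma exists_int_smul_of_mem_span (N : Submodule ℤ (ι → ℤ)) {v : ι → ℚ}
    (hv : v ∈ Submodule.span ℚ (⇑(toQ ι) '' (N : Set (ι → ℤ)))) :
    ∃ c : ℤ, c ≠ 0 ∧ ∃ w ∈ N, (c : ℚ) • v = toQ ι w := by
  induction hv using Submodule.span_induction with
  | mem x hx =>
    obtain ⟨w, hw, rfl⟩ := hx
    exact ⟨1, one_ne_zero, w, hw, by simp⟩
  | zero => exact ⟨1, one_ne_zero, 0, zero_mem _, by simp⟩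
  | add x y hx hy ihx ihy =>
    obtain ⟨c, hc, w, hw, hcw⟩ := ihx
    obtain ⟨d, hd, u, hu, hdu⟩ := ihy
    refine ⟨c * d, mul_ne_zero hc hd, d • w + c • u,
      N.add_mem (N.smul_mem _ hw) (N.smul_mem _ hu), ?_⟩
    rw [map_add, toQ_zsmul, toQ_zsmul, ← hcw, ← hdu]
    push_cast
    module
  | smul q x hx ihx =>
    obtain ⟨c, hc, w, hw, hcw⟩ := ihx
    refine ⟨(q.den : ℤ) * c, mul_ne_zero (by exact_mod_cast q.den_nz) hc,
      q.num • w, N.smul_mem _ hw, ?_⟩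
    rw [toQ_zsmul, ← hcw]
    have hden : (q.den : ℚ) * q = q.num := by rw [mul_comm]; exact Rat.mul_den_eq_num q
    push_cast
    have hsc : (q.den : ℚ) * (c : ℚ) * q = (q.num : ℚ) * (c : ℚ) := by
      rw [mul_comm ((q.den : ℚ)) ((c : ℚ)), mul_assoc, hden, mul_comm]
    rw [smul_smul, smul_smul, hsc]

lemma mem_of_toQ_mem_span (N : Submodule ℤ (ι → ℤ))
    (hNprim : ∀ (x : ι → ℤ) (c : ℤ), c ≠ 0 → c • x ∈ N → x ∈ N) {w : ι → ℤ}
    (hw : toQ ι w ∈ Submodule.span ℚ (⇑(toQ ι) '' (N : Set (ι → ℤ)))) : w ∈ N := by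
  obtain ⟨c, hc, w', hw', h⟩ := exists_int_smul_of_mem_span N hw
  rw [← toQ_zsmul] at h
  have : c • w = w' := toQ_injective h
  exact hNprim w c hc (this ▸ hw')

variable [DecidableEq ι]

/-- Surjectivity of `M → N^∨` for a primitive sublattice `N` of a unimodular lattice. -/
lemma exists_rep (G : Matrix ι ι ℤ) (hunimod : G.det = 1 ∨ G.det = -1)
    (N : Submodule ℤ (ι → ℤ))
    (hNprim : ∀ (x : ι → ℤ) (c : ℤ), c ≠ 0 → c • x ∈ N → x ∈ N)
    (x : ι → ℚ) (hint : ∀ t ∈ N, ∃ k : ℤ, bQ G x (toQ ι t) = (k : ℚ)) :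
    ∃ m : ι → ℤ, ∀ t ∈ N, (bZ G m t : ℚ) = bQ G x (toQ ι t) := by
  classical
  have hdet : IsUnit G.det := by
    rcases hunimod with h | h <;> simp [Int.isUnit_iff, h]
  -- the quotient is free, so N is a direct summand
  haveI : NoZeroSMulDivisors ℤ ((ι → ℤ) ⧸ N) := by
    refine ⟨fun {c} {q} h => ?_⟩
    by_cases hc : c = 0
    · exact Or.inl hc
    · right
      obtain ⟨v, rfl⟩ := Submodule.mkQ_surjective N q
      rw [← map_smul] at h
      have : c • v ∈ N := by
        rwa [← Submodule.ker_mkQ N, LinearMap.mem_ker]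
      have hv : v ∈ N := hNprim v c hc this
      rw [Submodule.mkQ_apply, Submodule.Quotient.mk_eq_zero]
      exact hv
  haveI : Module.Free ℤ ((ι → ℤ) ⧸ N) := Module.free_of_finite_type_torsion_free'
  obtain ⟨s, hs⟩ := Module.projective_lifting_property N.mkQ LinearMap.id
    (Submodule.mkQ_surjective N)
  set r : (ι → ℤ) →ₗ[ℤ] (ι → ℤ) := LinearMap.id - s ∘ₗ N.mkQ with hr
  have hcomp : ∀ q, N.mkQ (s q) = q := by
    intro q
    have h1 := LinearMap.ext_iff.mp hs q
    simpa using h1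
  have hrN : ∀ v, r v ∈ N := by
    intro v
    have h0 : N.mkQ (r v) = 0 := by
      have heq : r v = v - s (N.mkQ v) := rfl
      rw [heq, map_sub, hcomp, sub_self]
    rwa [← Submodule.ker_mkQ N, LinearMap.mem_ker]
  have hrt : ∀ t ∈ N, r t = t := by
    intro t ht
    have h0 : N.mkQ t = 0 := by rw [Submodule.mkQ_apply, Submodule.Quotient.mk_eq_zero]; exact ht
    simp [hr, h0]
  -- the ℤ-linear functional v ↦ bQ x (toQ (r v)) takes integer values
  have hint' : ∀ v : ι → ℤ, ∃ k : ℤ, bQ G x (toQ ι (r v)) = (k : ℚ) :=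
    fun v => hint (r v) (hrN v)
  set u : ι → ℤ := fun i => (hint' (fun j => if i = j then 1 else 0)).choose with huu
  have hu : ∀ i, ((u i : ℤ) : ℚ) = bQ G x (toQ ι (r (fun j => if i = j then 1 else 0))) :=
    fun i => ((hint' _).choose_spec).symm
  -- package as ℤ-linear map into ℚ
  set bQr : (ι → ℚ) →ₗ[ℤ] ℚ :=
    { toFun := fun v => bQ G x v
      map_add' := fun a b => bQ_add_right G x a b
      map_smul' := fun c v => by
        simp only [RingHom.id_apply]
        rw [zsmulQ, bQ_smul_right, zsmul_eq_mul] } with hbQr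
  set Fl : (ι → ℤ) →ₗ[ℤ] ℚ := bQr ∘ₗ ((toQ ι) ∘ₗ r) with hFl
  have hFt : ∀ t ∈ N, bQ G x (toQ ι t) = ((dotProduct t u : ℤ) : ℚ) := by
    intro t ht
    have h1 : bQ G x (toQ ι t) = Fl t := by
      simp only [hFl, LinearMap.coe_comp, Function.comp_apply]
      rw [hrt t ht]
      rfl
    rw [h1, LinearMap.pi_apply_eq_sum_univ Fl t]
    have h2 : ∀ i, Fl (fun j => if i = j then 1 else 0) = ((u i : ℤ) : ℚ) := by
      intro i
      rw [hu i]
      rfl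
    simp only [h2]
    rw [dotProduct]
    push_cast
    refine Finset.sum_congr rfl fun i _ => ?_
    rw [← Int.cast_smul_eq_zsmul ℚ (t i) ((u i : ℤ) : ℚ), smul_eq_mul]
  -- pull back the functional through the unimodular Gram matrix
  refine ⟨Matrix.vecMul u G⁻¹, fun t ht => ?_⟩
  have hvm : Matrix.vecMul (Matrix.vecMul u G⁻¹) G = u := by
    rw [Matrix.vecMul_vecMul, Matrix.nonsing_inv_mul G hdet, Matrix.vecMul_one]
  have : bZ G (Matrix.vecMul u G⁻¹) t = dotProduct t u := by
    rw [bZ, Matrix.dotProduct_mulVec, hvm, dotProduct_comm]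
  rw [this, hFt t ht]

end Aux

/-- **Lemma 4.5 (2-elementary).** Let `T` be a primitive nondegenerate sublattice of an
even unimodular lattice `M`, with orthogonal complement `S`.  If there is an
involution `σ ∈ O(M)` with `σ|_T = id` and `σ|_S = −id`, then `A_T` and `A_S` are
2-elementary. -/
theorem stmt_13 (ι : Type) [Fintype ι] [DecidableEq ι] (G : Matrix ι ι ℤ)
    (hsym : G.IsSymm) (heven : ∀ x : ι → ℤ, Even (bZ G x x))
    (hunimod : G.det = 1 ∨ G.det = -1)
    (T : Submodule ℤ (ι → ℤ))
    (hprim : ∀ (x : ι → ℤ) (c : ℤ), c ≠ 0 → c • x ∈ T → x ∈ T)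
    (hnondeg : ∀ t ∈ T, (∀ t' ∈ T, bZ G t t' = 0) → t = 0)
    (σ : (ι → ℤ) ≃ₗ[ℤ] (ι → ℤ))
    (hσiso : ∀ x y, bZ G (σ x) (σ y) = bZ G x y)
    (hσT : ∀ t ∈ T, σ t = t)
    (hσS : ∀ s ∈ orthoZ G (T : Set (ι → ℤ)), σ s = -s) :
    DiscIsTwoElementary G T ∧ DiscIsTwoElementary G (orthoZ G (T : Set (ι → ℤ))) := by
  classical
  set S : Submodule ℤ (ι → ℤ) := orthoZ G (T : Set (ι → ℤ)) with hS
  have hmemS : ∀ v : ι → ℤ, (∀ t ∈ T, bZ G v t = 0) → v ∈ S := fun v h => h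
  have hSdef : ∀ v ∈ S, ∀ t ∈ T, bZ G v t = 0 := fun v hv => hv
  have hSprim : ∀ (v : ι → ℤ) (c : ℤ), c ≠ 0 → c • v ∈ S → v ∈ S := by
    intro v c hc hcv
    apply hmemS
    intro t ht
    have h1 : bZ G (c • v) t = 0 := hSdef _ hcv t ht
    rw [bZ_smul_left] at h1
    exact (mul_eq_zero.mp h1).resolve_left hc
  -- bZ (σ m) t = bZ m t for t ∈ T
  have hσbT : ∀ (m : ι → ℤ), ∀ t ∈ T, bZ G (σ m) t = bZ G m t := by
    intro m t ht
    conv_lhs => rw [← hσT t ht]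
    exact hσiso m t
  -- m - σ m ∈ S for every m
  have hsub : ∀ m : ι → ℤ, m - σ m ∈ S := by
    intro m
    apply hmemS
    intro t ht
    rw [bZ_sub_left, hσbT m t ht, sub_self]
  -- bZ (σ m) s = - bZ m s for s ∈ S
  have hσbS : ∀ (m : ι → ℤ), ∀ s ∈ S, bZ G (σ m) s = - bZ G m s := by
    intro m s hs
    have h1 : bZ G (σ m) (σ s) = bZ G m s := hσiso m s
    rw [hσS s hs, bZ_neg_right] at h1
    linarith
  constructor
  · -- T part
    intro x hx hint
    obtain ⟨m, hm⟩ := exists_rep G hunimod T hprim x hint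
    obtain ⟨c, hc, t₀, ht₀, hct⟩ := exists_int_smul_of_mem_span T hx
    obtain ⟨d, hd, w₁, hdw⟩ := exists_denom (toQ ι m - x)
    have hw₁S : w₁ ∈ S := by
      apply hmemS
      intro t ht
      have h1 : bQ G (toQ ι m - x) (toQ ι t) = 0 := by
        rw [bQ_sub_left, bQ_toQ, hm t ht, sub_self]
      have h2 : (bZ G w₁ t : ℚ) = 0 := by
        rw [← bQ_toQ, ← hdw, bQ_smul_left, h1, mul_zero]
      exact_mod_cast h2
    have hkey : (c * d) • m = d • t₀ + c • w₁ := by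
      apply toQ_injective
      rw [map_add, toQ_zsmul, toQ_zsmul, toQ_zsmul, ← hct, ← hdw]
      push_cast
      module
    have hσkey : (c * d) • (σ m) = d • t₀ - c • w₁ := by
      have h1 := congrArg σ hkey
      rw [map_smul, map_add, map_smul, map_smul, hσT t₀ ht₀, hσS w₁ hw₁S] at h1
      rw [h1, smul_neg, ← sub_eq_add_neg]
    have hsum : (c * d) • (m + σ m) = (2 * d) • t₀ := by
      rw [smul_add, hkey, hσkey]
      module
    have hmemT : m + σ m ∈ T :=
      hprim _ (c * d) (mul_ne_zero hc hd) (by rw [hsum]; exact T.smul_mem _ ht₀)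
    refine ⟨m + σ m, hmemT, ?_⟩
    have hcdne : ((c * d : ℤ) : ℚ) ≠ 0 := Int.cast_ne_zero.mpr (mul_ne_zero hc hd)
    apply smul_right_injective (ι → ℚ) hcdne
    show ((c * d : ℤ) : ℚ) • toQ ι (m + σ m) = ((c * d : ℤ) : ℚ) • ((2 : ℤ) • x)
    rw [← toQ_zsmul, hsum, toQ_zsmul, ← hct, zsmulQ 2 x]
    rw [smul_smul, smul_smul]
    push_cast
    ring_nf
  · -- S part
    intro x hx hint
    obtain ⟨m, hm⟩ := exists_rep G hunimod S hSprim x hint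
    have hwS : m - σ m ∈ S := hsub m
    set z : ι → ℚ := toQ ι (m - σ m) - (2 : ℚ) • x with hz
    have hzmem : z ∈ Submodule.span ℚ (⇑(toQ ι) '' (S : Set (ι → ℤ))) := by
      apply Submodule.sub_mem
      · exact Submodule.subset_span ⟨m - σ m, hwS, rfl⟩
      · exact Submodule.smul_mem _ _ hx
    have hzperp : ∀ s ∈ S, bQ G z (toQ ι s) = 0 := by
      intro s hs
      rw [hz, bQ_sub_left, bQ_toQ, bQ_smul_left]
      have h1 : bZ G (m - σ m) s = 2 * bZ G m s := by
        rw [bZ_sub_left, hσbS m s hs]; ring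
      rw [h1]
      push_cast
      rw [hm s hs]
      ring
    obtain ⟨e, he, s₀, hs₀S, hez⟩ := exists_int_smul_of_mem_span S hzmem
    have hs₀perpS : ∀ s ∈ S, bZ G s₀ s = 0 := by
      intro s hs
      have h1 : (bZ G s₀ s : ℚ) = 0 := by
        rw [← bQ_toQ, ← hez, bQ_smul_left, hzperp s hs, mul_zero]
      exact_mod_cast h1
    have hs₀all : ∀ v : ι → ℤ, bZ G s₀ v = 0 := by
      intro v
      have h2 : bZ G s₀ (v - σ v) = 0 := hs₀perpS _ (hsub v)
      have h3 : bZ G s₀ (σ v) = - bZ G s₀ v := by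
        have h4 := hσiso s₀ v
        rw [hσS s₀ hs₀S, bZ_neg_left] at h4
        linarith
      rw [bZ_sub_right, h3] at h2
      linarith
    have hs₀0 : s₀ = 0 := by
      have hvm : Matrix.vecMul s₀ G = 0 := by
        funext j
        have h1 := hs₀all (fun k => if k = j then 1 else 0)
        have h2 : bZ G s₀ (fun k => if k = j then 1 else 0)
            = dotProduct (Matrix.vecMul s₀ G) (fun k => if k = j then 1 else 0) := by
          rw [bZ, Matrix.dotProduct_mulVec]
        rw [h2] at h1
        simpa [dotProduct] using h1
      have hdetz : G.det • s₀ = 0 := by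
        calc G.det • s₀ = Matrix.vecMul s₀ (G.det • 1) := by
              funext j
              simp [Matrix.vecMul, dotProduct, Matrix.one_apply, mul_comm]
          _ = Matrix.vecMul s₀ (G * G.adjugate) := by rw [Matrix.mul_adjugate]
          _ = Matrix.vecMul (Matrix.vecMul s₀ G) G.adjugate := (Matrix.vecMul_vecMul _ _ _).symm
          _ = 0 := by rw [hvm]; funext j; simp [Matrix.vecMul]
      rcases hunimod with h | h <;> rw [h] at hdetz
      · simpa using hdetz
      · have := congrArg (fun v => (-1 : ℤ) • v) hdetz
        simpa using this
    have hz0 : z = 0 := by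
      have h1 : (e : ℚ) • z = 0 := by rw [hez, hs₀0, map_zero]
      have hene : (e : ℚ) ≠ 0 := Int.cast_ne_zero.mpr he
      exact (smul_eq_zero.mp h1).resolve_left hene
    refine ⟨m - σ m, hwS, ?_⟩
    have h2 : toQ ι (m - σ m) = (2 : ℚ) • x := by
      have := sub_eq_zero.mp hz0
      exact this
    rw [h2, zsmulQ]
    norm_num

end A0607339
end
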